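/- arXiv:2105.11562 — 4 statements merged into one kernel-verified Lean document; each statement's English description precedes it below -/
import Mathlib

section
/- Let B be an n × n complex matrix, T_E, T_I > 0, and let A be the 2n × 2n block matrix with blocks A = [[−(1/T_E) I_n, B], [(1/T_E) I_n, −(1/T_I) I_n]]. Then a complex number μ is an eigenvalue of A if and only if T_E (μ + 1/T_E)(μ + 1/T_I) is an eigenvalue of B. -/
lemma mem_spectrum_iff_det_eq_zero {m : Type*} [Fintype m] [DecidableEq m]
    (M : Matrix m m ℂ) (μ : ℂ) :
    μ ∈ spectrum ℂ M ↔ (μ • (1 : Matrix m m ℂ) - M).det = 0 := by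
  simp [spectrum.mem_iff, Matrix.isUnit_iff_isUnit_det, isUnit_iff_ne_zero,
    Algebra.algebraMap_eq_smul_one]

/-- Let `B` be an `n × n` complex matrix, `T_E, T_I > 0`, and let `A` be the `2n × 2n`
block matrix `A = [[−(1/T_E) I, B], [(1/T_E) I, −(1/T_I) I]]`.  Then a complex number
`μ` is an eigenvalue of `A` if and only if `T_E (μ + 1/T_E)(μ + 1/T_I)` is an
eigenvalue of `B`. -/
theorem block_matrix_eigenvalue_iff (n : ℕ) (B : Matrix (Fin n) (Fin n) ℂ)
    (TE TI : ℝ) (hTE : 0 < TE) (hTI : 0 < TI) (μ : ℂ) :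
    μ ∈ spectrum ℂ
      (Matrix.fromBlocks
        ((-(1 / (TE : ℂ))) • (1 : Matrix (Fin n) (Fin n) ℂ)) B
        ((1 / (TE : ℂ)) • (1 : Matrix (Fin n) (Fin n) ℂ))
        ((-(1 / (TI : ℂ))) • (1 : Matrix (Fin n) (Fin n) ℂ))) ↔
    (TE : ℂ) * (μ + 1 / (TE : ℂ)) * (μ + 1 / (TI : ℂ)) ∈ spectrum ℂ B := by
  have hTE' : (TE : ℂ) ≠ 0 := by exact_mod_cast hTE.ne'
  set lam : ℂ := (TE : ℂ) * (μ + 1 / (TE : ℂ)) * (μ + 1 / (TI : ℂ)) with hlam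
  rw [mem_spectrum_iff_det_eq_zero, mem_spectrum_iff_det_eq_zero]
  -- rewrite μ•1 - A as a block matrix
  have h1 : (μ • (1 : Matrix (Fin n ⊕ Fin n) (Fin n ⊕ Fin n) ℂ) -
      Matrix.fromBlocks
        ((-(1 / (TE : ℂ))) • (1 : Matrix (Fin n) (Fin n) ℂ)) B
        ((1 / (TE : ℂ)) • (1 : Matrix (Fin n) (Fin n) ℂ))
        ((-(1 / (TI : ℂ))) • (1 : Matrix (Fin n) (Fin n) ℂ))) =
      Matrix.fromBlocks
        ((μ + 1 / (TE : ℂ)) • (1 : Matrix (Fin n) (Fin n) ℂ)) (-B)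
        ((-(1 / (TE : ℂ))) • (1 : Matrix (Fin n) (Fin n) ℂ))
        ((μ + 1 / (TI : ℂ)) • (1 : Matrix (Fin n) (Fin n) ℂ)) := by
    rw [← Matrix.fromBlocks_one, Matrix.fromBlocks_smul, sub_eq_add_neg,
      Matrix.fromBlocks_neg, Matrix.fromBlocks_add]
    congr 1 <;> simp [add_smul, sub_eq_add_neg] <;> module
  rw [h1]
  -- the block-column swap matrix
  set X : Matrix (Fin n ⊕ Fin n) (Fin n ⊕ Fin n) ℂ :=
    Matrix.fromBlocks 0 1 1 0 with hX
  have hX2 : X * X = 1 := by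
    rw [hX, Matrix.fromBlocks_multiply]
    simp [Matrix.fromBlocks_one]
  have hXdet : X.det ≠ 0 := by
    intro h
    have : X.det * X.det = 1 := by rw [← Matrix.det_mul, hX2, Matrix.det_one]
    rw [h, mul_zero] at this
    exact zero_ne_one this
  -- multiplying on the right by X swaps the block columns
  have h2 : (Matrix.fromBlocks
        ((μ + 1 / (TE : ℂ)) • (1 : Matrix (Fin n) (Fin n) ℂ)) (-B)
        ((-(1 / (TE : ℂ))) • (1 : Matrix (Fin n) (Fin n) ℂ))
        ((μ + 1 / (TI : ℂ)) • (1 : Matrix (Fin n) (Fin n) ℂ))) * X =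
      Matrix.fromBlocks
        (-B) ((μ + 1 / (TE : ℂ)) • (1 : Matrix (Fin n) (Fin n) ℂ))
        ((μ + 1 / (TI : ℂ)) • (1 : Matrix (Fin n) (Fin n) ℂ))
        ((-(1 / (TE : ℂ))) • (1 : Matrix (Fin n) (Fin n) ℂ)) := by
    rw [hX, Matrix.fromBlocks_multiply]
    simp
  -- the lower-right block is invertible
  have hc : (-(1 / (TE : ℂ))) ≠ 0 := by
    simp [hTE']
  haveI : Invertible ((-(1 / (TE : ℂ))) • (1 : Matrix (Fin n) (Fin n) ℂ)) :=
    ⟨(-(1 / (TE : ℂ)))⁻¹ • (1 : Matrix (Fin n) (Fin n) ℂ),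
      by rw [Matrix.smul_mul, Matrix.mul_smul, Matrix.one_mul, smul_smul,
             inv_mul_cancel₀ hc, one_smul],
      by rw [Matrix.smul_mul, Matrix.mul_smul, Matrix.one_mul, smul_smul,
             mul_inv_cancel₀ hc, one_smul]⟩
  have hinv : ⅟((-(1 / (TE : ℂ))) • (1 : Matrix (Fin n) (Fin n) ℂ)) =
      (-(1 / (TE : ℂ)))⁻¹ • (1 : Matrix (Fin n) (Fin n) ℂ) :=
    invOf_eq_right_inv (by rw [Matrix.smul_mul, Matrix.mul_smul, Matrix.one_mul, smul_smul,
      mul_inv_cancel₀ hc, one_smul])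
  have h3 : ((Matrix.fromBlocks
        ((μ + 1 / (TE : ℂ)) • (1 : Matrix (Fin n) (Fin n) ℂ)) (-B)
        ((-(1 / (TE : ℂ))) • (1 : Matrix (Fin n) (Fin n) ℂ))
        ((μ + 1 / (TI : ℂ)) • (1 : Matrix (Fin n) (Fin n) ℂ))) * X).det =
      ((-(1 / (TE : ℂ))) • (1 : Matrix (Fin n) (Fin n) ℂ)).det *
        (lam • (1 : Matrix (Fin n) (Fin n) ℂ) - B).det := by
    rw [h2, Matrix.det_fromBlocks₂₂, hinv]
    congr 2
    have key : ((μ + 1 / (TE : ℂ)) • (1 : Matrix (Fin n) (Fin n) ℂ)) *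
        ((-(1 / (TE : ℂ)))⁻¹ • (1 : Matrix (Fin n) (Fin n) ℂ)) *
        ((μ + 1 / (TI : ℂ)) • (1 : Matrix (Fin n) (Fin n) ℂ)) = (-lam) • 1 := by
      simp only [Matrix.smul_mul, Matrix.mul_smul, Matrix.one_mul, Matrix.mul_one, smul_smul]
      congr 1
      have hTI' : (TI : ℂ) ≠ 0 := by exact_mod_cast hTI.ne'
      rw [hlam]
      field_simp
    rw [key, neg_smul, sub_neg_eq_add]
    abel
  have hdetc : ((-(1 / (TE : ℂ))) • (1 : Matrix (Fin n) (Fin n) ℂ)).det ≠ 0 := by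
    rw [Matrix.det_smul, Matrix.det_one, mul_one]
    exact pow_ne_zero _ hc
  rw [Matrix.det_mul] at h3
  constructor
  · intro h
    rw [h, zero_mul] at h3
    rcases mul_eq_zero.mp h3.symm with h' | h'
    · exact absurd h' hdetc
    · exact h'
  · intro h
    have : (Matrix.fromBlocks
        ((μ + 1 / (TE : ℂ)) • (1 : Matrix (Fin n) (Fin n) ℂ)) (-B)
        ((-(1 / (TE : ℂ))) • (1 : Matrix (Fin n) (Fin n) ℂ))
        ((μ + 1 / (TI : ℂ)) • (1 : Matrix (Fin n) (Fin n) ℂ))).det * X.det = 0 := by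
      rw [h3, h, mul_zero]
    rcases mul_eq_zero.mp this with h' | h'
    · exact h'
    · exact absurd h' hXdet
end

section
/- Subcritical stability of the linearized infectious subsystem: let B be an n × n complex matrix and T_E, T_I > 0. If every eigenvalue λ of B satisfies |λ| < 1/T_I (equivalently, the spectral radius of T_I B is less than 1), then every eigenvalue μ of the block matrix A = [[−(1/T_E) I_n, B], [(1/T_E) I_n, −(1/T_I) I_n]] has strictly negative real part. -/
/-- Subcritical stability of the linearized infectious subsystem: let `B` be an
`n × n` complex matrix and `T_E, T_I > 0`.  If every eigenvalue `λ` of `B`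
satisfies `|λ| < 1/T_I`, then every eigenvalue `μ` of the block matrix
`A = [[−(1/T_E) I, B], [(1/T_E) I, −(1/T_I) I]]` has strictly negative real part. -/
theorem block_matrix_subcritical_stability (n : ℕ) (B : Matrix (Fin n) (Fin n) ℂ)
    (TE TI : ℝ) (hTE : 0 < TE) (hTI : 0 < TI)
    (hB : ∀ lam ∈ spectrum ℂ B, ‖lam‖ < 1 / TI) :
    ∀ μ ∈ spectrum ℂ
      (Matrix.fromBlocks
        ((-(1 / (TE : ℂ))) • (1 : Matrix (Fin n) (Fin n) ℂ)) B
        ((1 / (TE : ℂ)) • (1 : Matrix (Fin n) (Fin n) ℂ))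
        ((-(1 / (TI : ℂ))) • (1 : Matrix (Fin n) (Fin n) ℂ))),
      μ.re < 0 := by
  intro μ hμ
  set a : ℂ := 1 / (TE : ℂ) with ha_def
  set b : ℂ := 1 / (TI : ℂ) with hb_def
  have hTE0 : (TE : ℂ) ≠ 0 := by exact_mod_cast hTE.ne'
  have hTI0 : (TI : ℂ) ≠ 0 := by exact_mod_cast hTI.ne'
  have ha0 : a ≠ 0 := one_div_ne_zero hTE0
  have hb0 : b ≠ 0 := one_div_ne_zero hTI0
  -- turn spectrum membership into an eigenvector
  rw [← AlgEquiv.spectrum_eq (Matrix.toLinAlgEquiv' :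
      Matrix (Fin n ⊕ Fin n) (Fin n ⊕ Fin n) ℂ ≃ₐ[ℂ] _)] at hμ
  obtain ⟨v, hv⟩ := (Module.End.hasEigenvalue_iff_mem_spectrum.mpr hμ).exists_hasEigenvector
  have hv0 : v ≠ 0 := hv.right
  have hveq : (Matrix.fromBlocks ((-a) • (1 : Matrix (Fin n) (Fin n) ℂ)) B
      (a • (1 : Matrix (Fin n) (Fin n) ℂ)) ((-b) • (1 : Matrix (Fin n) (Fin n) ℂ))).mulVec v
      = μ • v := by
    have := hv.apply_eq_smul
    simpa [Matrix.toLinAlgEquiv'_apply, Matrix.toLin'_apply] using this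
  set x : Fin n → ℂ := v ∘ Sum.inl with hx
  set y : Fin n → ℂ := v ∘ Sum.inr with hy
  rw [Matrix.fromBlocks_mulVec] at hveq
  have h1 : (-a) • x + B.mulVec y = μ • x := by
    funext i
    have := congrFun hveq (Sum.inl i)
    simpa [Matrix.neg_mulVec, Matrix.smul_mulVec, Matrix.one_mulVec, hx, hy] using this
  have h2 : a • x + (-b) • y = μ • y := by
    funext i
    have := congrFun hveq (Sum.inr i)
    simpa [Matrix.neg_mulVec, Matrix.smul_mulVec, Matrix.one_mulVec, hx, hy] using this
  -- a • x = (μ + b) • y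
  have hax : a • x = (μ + b) • y := by
    have : a • x = μ • y + b • y := by
      funext i
      have := congrFun h2 i
      simp only [Pi.add_apply, Pi.smul_apply, smul_eq_mul, neg_smul, Pi.neg_apply] at this ⊢
      linear_combination this
    rw [this, ← add_smul]
  have hy0 : y ≠ 0 := by
    intro hy0
    apply hv0
    have hx0 : x = 0 := by
      have : a • x = 0 := by rw [hax, hy0, smul_zero]
      have := smul_eq_zero.mp this
      tauto
    funext i
    cases i with
    | inl i => exact congrFun hx0 i
    | inr i => exact congrFun hy0 i
  -- B y = ((μ + a)(μ + b)/a) • y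
  have hBy : B.mulVec y = ((μ + a) * (μ + b) / a) • y := by
    have h1' : B.mulVec y = (μ + a) • x := by
      funext i
      have := congrFun h1 i
      simp only [Pi.add_apply, Pi.smul_apply, smul_eq_mul, neg_smul, Pi.neg_apply,
        add_smul] at this ⊢
      linear_combination this
    have : a • (B.mulVec y) = ((μ + a) * (μ + b)) • y := by
      rw [h1', smul_comm, hax, smul_smul]
    funext i
    have := congrFun this i
    simp only [Pi.smul_apply, smul_eq_mul] at this ⊢
    field_simp
    linear_combination this
  -- hence (μ+a)(μ+b)/a is an eigenvalue of B
  have hspec : (μ + a) * (μ + b) / a ∈ spectrum ℂ B := by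
    rw [← AlgEquiv.spectrum_eq (Matrix.toLinAlgEquiv' :
        Matrix (Fin n) (Fin n) ℂ ≃ₐ[ℂ] _)]
    refine Module.End.HasEigenvalue.mem_spectrum
      (Module.End.hasEigenvalue_of_hasEigenvector ⟨?_, hy0⟩)
    rw [Module.End.mem_eigenspace_iff]
    simpa [Matrix.toLinAlgEquiv'_apply, Matrix.toLin'_apply] using hBy
  have habs := hB _ hspec
  -- now the complex-number estimate
  by_contra hre
  push_neg at hre
  have haa : ‖a‖ = 1 / TI * (TI / TE) := by
    simp [ha_def, map_div₀, Complex.norm_real, abs_of_pos hTE]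
    field_simp
  have h1a : (a : ℂ).re = 1 / TE := by
    simp [ha_def, Complex.div_re]
  have h1b : (b : ℂ).re = 1 / TI := by
    simp [hb_def, Complex.div_re]
  have hμa : 1 / TE ≤ ‖μ + a‖ := by
    calc 1 / TE ≤ (μ + a).re := by
          rw [Complex.add_re, h1a]; linarith
      _ ≤ |(μ + a).re| := le_abs_self _
      _ ≤ ‖μ + a‖ := Complex.abs_re_le_norm _
  have hμb : 1 / TI ≤ ‖μ + b‖ := by
    calc 1 / TI ≤ (μ + b).re := by
          rw [Complex.add_re, h1b]; linarith
      _ ≤ |(μ + b).re| := le_abs_self _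
      _ ≤ ‖μ + b‖ := Complex.abs_re_le_norm _
  have hTEpos : (0:ℝ) < 1 / TE := by positivity
  have hTIpos : (0:ℝ) < 1 / TI := by positivity
  have : 1 / TE * (1 / TI) ≤ ‖(μ + a) * (μ + b)‖ := by
    rw [norm_mul]
    exact mul_le_mul hμa hμb (le_of_lt hTIpos) (norm_nonneg _)
  have habs' : ‖(μ + a) * (μ + b)‖ < 1 / TI * ‖a‖ := by
    have := habs
    rw [norm_div] at this
    calc ‖(μ + a) * (μ + b)‖
        = ‖(μ + a) * (μ + b)‖ / ‖a‖ * ‖a‖ := by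
          rw [div_mul_cancel₀ _ (norm_ne_zero_iff.mpr ha0)]
      _ < 1 / TI * ‖a‖ := by
          apply mul_lt_mul_of_pos_right this
          simpa using (norm_pos_iff.mpr ha0)
  have haval : ‖a‖ = 1 / TE := by
    simp [ha_def, map_div₀, Complex.norm_real, abs_of_pos hTE]
  rw [haval] at habs'
  linarith [this, habs']
end

section
/- Supercritical instability of the linearized infectious subsystem: let B be an n × n real matrix and T_E, T_I > 0. If B has a real eigenvalue λ with λ T_I > 1, then the block matrix A = [[−(1/T_E) I_n, B], [(1/T_E) I_n, −(1/T_I) I_n]] has a real eigenvalue μ > 0. -/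
/-- Supercritical instability of the linearized infectious subsystem: let `B` be an
`n × n` real matrix and `T_E, T_I > 0`.  If `B` has a real eigenvalue `λ` with
`λ T_I > 1`, then the block matrix `A = [[−(1/T_E) I, B], [(1/T_E) I, −(1/T_I) I]]`
has a real eigenvalue `μ > 0`. -/
theorem block_matrix_supercritical_instability (n : ℕ) (B : Matrix (Fin n) (Fin n) ℝ)
    (TE TI : ℝ) (hTE : 0 < TE) (hTI : 0 < TI)
    (lam : ℝ) (hlam : lam ∈ spectrum ℝ B) (hsup : 1 < lam * TI) :
    ∃ μ : ℝ, 0 < μ ∧ μ ∈ spectrum ℝ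
      (Matrix.fromBlocks
        ((-(1 / TE)) • (1 : Matrix (Fin n) (Fin n) ℝ)) B
        ((1 / TE) • (1 : Matrix (Fin n) (Fin n) ℝ))
        ((-(1 / TI)) • (1 : Matrix (Fin n) (Fin n) ℝ))) := by
  classical
  have hTE' : TE ≠ 0 := ne_of_gt hTE
  have hTI' : TI ≠ 0 := ne_of_gt hTI
  -- extract a real eigenvector of B
  rw [spectrum.mem_iff] at hlam
  rw [Matrix.isUnit_iff_isUnit_det, isUnit_iff_ne_zero, not_not] at hlam
  obtain ⟨v, hv0, hv⟩ := (Matrix.exists_mulVec_eq_zero_iff).2 hlam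
  have hBv : B.mulVec v = lam • v := by
    have h1 : (algebraMap ℝ (Matrix (Fin n) (Fin n) ℝ) lam - B).mulVec v
        = lam • v - B.mulVec v := by
      rw [Matrix.sub_mulVec, Algebra.algebraMap_eq_smul_one, Matrix.smul_mulVec,
        Matrix.one_mulVec]
    rw [h1, sub_eq_zero] at hv
    exact hv.symm
  -- the positive root of (μ + 1/TE)(μ + 1/TI) = lam/TE
  obtain ⟨μ, hμpos, hkey⟩ :
      ∃ μ : ℝ, 0 < μ ∧ (μ + 1 / TE) * (μ + 1 / TI) = lam / TE := by
    have hq : 0 < lam / TE - 1 / (TE * TI) := by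
      have h1 : lam / TE - 1 / (TE * TI) = (lam * TI - 1) / (TE * TI) := by
        field_simp
      rw [h1]
      exact div_pos (by linarith) (by positivity)
    obtain ⟨p, hp⟩ : ∃ p : ℝ, p = 1 / TE + 1 / TI := ⟨_, rfl⟩
    have hppos : 0 < p := by rw [hp]; positivity
    have hD : (0:ℝ) < p ^ 2 + 4 * (lam / TE - 1 / (TE * TI)) := by nlinarith
    obtain ⟨s, hsnn, hs2⟩ : ∃ s : ℝ, 0 ≤ s ∧ s ^ 2 = p ^ 2 + 4 * (lam / TE - 1 / (TE * TI)) :=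
      ⟨Real.sqrt _, Real.sqrt_nonneg _, Real.sq_sqrt hD.le⟩
    have hsp : p < s := by nlinarith
    refine ⟨(-p + s) / 2, by linarith, ?_⟩
    have hexp : ((-p + s) / 2 + 1 / TE) * ((-p + s) / 2 + 1 / TI)
        = ((-p + s) / 2) ^ 2 + p * ((-p + s) / 2) + 1 / (TE * TI) := by
      rw [hp]; field_simp; ring
    rw [hexp]
    linear_combination hs2 / 4
  refine ⟨μ, hμpos, ?_⟩
  -- build the block eigenvector
  set a : ℝ := TE * (μ + 1 / TI) with ha
  have ha1 : (μ + 1 / TE) * a = lam := by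
    rw [ha]
    have h : (μ + 1 / TE) * (TE * (μ + 1 / TI)) = TE * ((μ + 1 / TE) * (μ + 1 / TI)) := by ring
    rw [h, hkey]; field_simp
  have ha2 : (1 / TE) * a = μ + 1 / TI := by
    rw [ha]; field_simp
  set w : Fin n ⊕ Fin n → ℝ := Sum.elim (a • v) v with hw
  have hw0 : w ≠ 0 := by
    intro h
    apply hv0
    funext i
    have := congrFun h (Sum.inr i)
    simpa [hw] using this
  set A : Matrix (Fin n ⊕ Fin n) (Fin n ⊕ Fin n) ℝ :=
      Matrix.fromBlocks
        ((-(1 / TE)) • (1 : Matrix (Fin n) (Fin n) ℝ)) B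
        ((1 / TE) • (1 : Matrix (Fin n) (Fin n) ℝ))
        ((-(1 / TI)) • (1 : Matrix (Fin n) (Fin n) ℝ)) with hA
  have hker : (algebraMap ℝ (Matrix (Fin n ⊕ Fin n) (Fin n ⊕ Fin n) ℝ) μ - A).mulVec w = 0 := by
    have hmv : A.mulVec w = Sum.elim
        (((-(1 / TE)) • (1 : Matrix (Fin n) (Fin n) ℝ)).mulVec (a • v) + B.mulVec v)
        (((1 / TE) • (1 : Matrix (Fin n) (Fin n) ℝ)).mulVec (a • v)
          + ((-(1 / TI)) • (1 : Matrix (Fin n) (Fin n) ℝ)).mulVec v) := by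
      rw [hA, hw, Matrix.fromBlocks_mulVec, Sum.elim_comp_inl, Sum.elim_comp_inr]
    rw [Matrix.sub_mulVec, Algebra.algebraMap_eq_smul_one, Matrix.smul_mulVec,
      Matrix.one_mulVec, hmv]
    funext i
    cases i with
    | inl i =>
      simp only [Pi.sub_apply, Pi.smul_apply, Sum.elim_inl, Pi.add_apply, hw,
        Matrix.smul_mulVec, Matrix.one_mulVec, hBv, Pi.zero_apply, smul_eq_mul]
      linear_combination (v i) * ha1
    | inr i =>
      simp only [Pi.sub_apply, Pi.smul_apply, Sum.elim_inr, Pi.add_apply, hw,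
        Matrix.smul_mulVec, Matrix.one_mulVec, Pi.zero_apply, smul_eq_mul]
      linear_combination (-(v i)) * ha2
  rw [spectrum.mem_iff, Matrix.isUnit_iff_isUnit_det, isUnit_iff_ne_zero, not_not,
    ← Matrix.exists_mulVec_eq_zero_iff]
  exact ⟨w, hw0, hker⟩
end

section
/- Nonnegativity invariance of the epidemic model: assume in addition that λ_{kg}(t) ≥ 0 and v_{kg}(t) ≥ 0 for all t ≥ 0 and all (k,g). If a solution of the epidemic model on [0, ∞) has all 16 compartment values nonnegative at t = 0 for every stratum (k,g), then all compartment values remain nonnegative for all t ≥ 0 and all (k,g). -/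
/-- If `f' t ≥ -(a t * f t)` on `[0,∞)` with `a` continuous and `f 0 ≥ 0`,
then `f` stays nonnegative on `[0,∞)`. -/
lemma nonneg_of_linear_bound (a f f' : ℝ → ℝ) (ha : Continuous a)
    (hd : ∀ t ∈ Set.Ici (0:ℝ), HasDerivAt f (f' t) t)
    (hge : ∀ t ∈ Set.Ici (0:ℝ), -(a t * f t) ≤ f' t)
    (h0 : 0 ≤ f 0) : ∀ t ∈ Set.Ici (0:ℝ), 0 ≤ f t := by
  set A : ℝ → ℝ := fun u => ∫ x in (0:ℝ)..u, a x with hAdef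
  have hA : ∀ s : ℝ, HasDerivAt A (a s) s := fun s =>
    intervalIntegral.integral_hasDerivAt_right (ha.intervalIntegrable 0 s)
      (ha.stronglyMeasurableAtFilter _ _) ha.continuousAt
  set g : ℝ → ℝ := fun s => Real.exp (A s) * f s with hgdef
  have hg : ∀ s ∈ Set.Ici (0:ℝ),
      HasDerivAt g (Real.exp (A s) * a s * f s + Real.exp (A s) * f' s) s := by
    intro s hs
    have h1 : HasDerivAt (fun u => Real.exp (A u)) (Real.exp (A s) * a s) s := (hA s).exp
    exact h1.mul (hd s hs)
  have hmono : MonotoneOn g (Set.Ici (0:ℝ)) := by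
    apply monotoneOn_of_deriv_nonneg (convex_Ici 0)
    · intro s hs; exact ((hg s hs).continuousAt).continuousWithinAt
    · intro s hs
      rw [interior_Ici] at hs
      exact ((hg s (Set.mem_Ici.mpr (le_of_lt hs))).differentiableAt).differentiableWithinAt
    · intro s hs
      rw [interior_Ici] at hs
      have hs' : s ∈ Set.Ici (0:ℝ) := Set.mem_Ici.mpr (le_of_lt hs)
      rw [(hg s hs').deriv]
      have h2 := hge s hs'
      have h3 := (Real.exp_pos (A s)).le
      have h4 := mul_nonneg h3 (show 0 ≤ a s * f s + f' s by linarith)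
      nlinarith [h4]
  intro t ht
  have h4 : g 0 ≤ g t := hmono (Set.mem_Ici.mpr (le_refl 0)) ht ht
  have h5 : g 0 = f 0 := by simp [hgdef, hAdef]
  rw [h5] at h4
  have h6 : g t = Real.exp (A t) * f t := rfl
  rw [h6] at h4
  nlinarith [Real.exp_pos (A t), h4, h0]


set_option maxHeartbeats 2000000

/-- Nonnegativity invariance of the epidemic model: if the forces of infection and
vaccination rates are nonnegative on `[0, ∞)` and a solution of the epidemic model on
`[0, ∞)` has all 16 compartment values nonnegative at `t = 0` for every stratum, then
all compartment values remain nonnegative for all `t ≥ 0` and all strata. -/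
theorem epidemic_nonnegativity_invariance
    (J : Set ℝ) (hJ : J = Set.Ici (0 : ℝ))
    (K G : ℕ) (hK : 0 < K) (hG : 0 < G)
    (TE TI TQ0 TQ1 THw THc THr TV : ℝ)
    (hTE : 0 < TE) (hTI : 0 < TI) (hTQ0 : 0 < TQ0) (hTQ1 : 0 < TQ1)
    (hTHw : 0 < THw) (hTHc : 0 < THc) (hTHr : 0 < THr) (hTV : 0 < TV)
    (e ω π : ℝ)
    (he : e ∈ Set.Icc (0 : ℝ) 1) (hω : ω ∈ Set.Icc (0 : ℝ) 1) (hπ : π ∈ Set.Icc (0 : ℝ) 1)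
    (ph pc muq muw muc : Fin G → ℝ)
    (hph : ∀ g, ph g ∈ Set.Icc (0 : ℝ) 1) (hpc : ∀ g, pc g ∈ Set.Icc (0 : ℝ) 1)
    (hmuq : ∀ g, muq g ∈ Set.Icc (0 : ℝ) 1) (hmuw : ∀ g, muw g ∈ Set.Icc (0 : ℝ) 1)
    (hmuc : ∀ g, muc g ∈ Set.Icc (0 : ℝ) 1)
    (lam vac : Fin K → Fin G → ℝ → ℝ)
    (hlam_cont : ∀ k g, Continuous (lam k g)) (hvac_cont : ∀ k g, Continuous (vac k g))
    (Sx Su Sv Sp E Ev I Iv Q0 Q1 Hw Hc Hr R D V : Fin K → Fin G → ℝ → ℝ)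
    (hSx : ∀ t ∈ J, ∀ k g, HasDerivAt (Sx k g) (-(lam k g t * Sx k g t)) t)
    (hSu : ∀ t ∈ J, ∀ k g, HasDerivAt (Su k g)
      (-(lam k g t * Su k g t) - vac k g t * Su k g t) t)
    (hSv : ∀ t ∈ J, ∀ k g, HasDerivAt (Sv k g)
      (vac k g t * Su k g t - lam k g t * Sv k g t - Sv k g t / TV) t)
    (hSp : ∀ t ∈ J, ∀ k g, HasDerivAt (Sp k g)
      ((1 - e) * Sv k g t / TV - (1 - ω) * lam k g t * Sp k g t) t)
    (hE : ∀ t ∈ J, ∀ k g, HasDerivAt (E k g)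
      (lam k g t * (Sx k g t + Su k g t + Sv k g t) - E k g t / TE) t)
    (hEv : ∀ t ∈ J, ∀ k g, HasDerivAt (Ev k g)
      ((1 - ω) * lam k g t * Sp k g t - Ev k g t / TE) t)
    (hI : ∀ t ∈ J, ∀ k g, HasDerivAt (I k g) (E k g t / TE - I k g t / TI) t)
    (hIv : ∀ t ∈ J, ∀ k g, HasDerivAt (Iv k g) (Ev k g t / TE - Iv k g t / TI) t)
    (hQ0 : ∀ t ∈ J, ∀ k g, HasDerivAt (Q0 k g)
      ((1 - ph g) * I k g t / TI + (1 - (1 - π) * ph g) * Iv k g t / TI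
        - Q0 k g t / TQ0) t)
    (hQ1 : ∀ t ∈ J, ∀ k g, HasDerivAt (Q1 k g)
      (ph g * (I k g t + (1 - π) * Iv k g t) / TI - Q1 k g t / TQ1) t)
    (hHw : ∀ t ∈ J, ∀ k g, HasDerivAt (Hw k g) (Q1 k g t / TQ1 - Hw k g t / THw) t)
    (hHc : ∀ t ∈ J, ∀ k g, HasDerivAt (Hc k g)
      (pc g * Hw k g t / THw - Hc k g t / THc) t)
    (hHr : ∀ t ∈ J, ∀ k g, HasDerivAt (Hr k g)
      ((1 - muc g) * Hc k g t / THc - Hr k g t / THr) t)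
    (hR : ∀ t ∈ J, ∀ k g, HasDerivAt (R k g)
      ((1 - muq g) * Q0 k g t / TQ0 + (1 - muw g) * (1 - pc g) * Hw k g t / THw
        + Hr k g t / THr) t)
    (hD : ∀ t ∈ J, ∀ k g, HasDerivAt (D k g)
      (muq g * Q0 k g t / TQ0 + muw g * (1 - pc g) * Hw k g t / THw
        + muc g * Hc k g t / THc) t)
    (hV : ∀ t ∈ J, ∀ k g, HasDerivAt (V k g) (e * Sv k g t / TV) t)
    (hlam_nonneg : ∀ t ∈ J, ∀ k g, 0 ≤ lam k g t)
    (hvac_nonneg : ∀ t ∈ J, ∀ k g, 0 ≤ vac k g t)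
    (h0 : ∀ k g, 0 ≤ Sx k g 0 ∧ 0 ≤ Su k g 0 ∧ 0 ≤ Sv k g 0 ∧ 0 ≤ Sp k g 0
      ∧ 0 ≤ E k g 0 ∧ 0 ≤ Ev k g 0 ∧ 0 ≤ I k g 0 ∧ 0 ≤ Iv k g 0
      ∧ 0 ≤ Q0 k g 0 ∧ 0 ≤ Q1 k g 0 ∧ 0 ≤ Hw k g 0 ∧ 0 ≤ Hc k g 0
      ∧ 0 ≤ Hr k g 0 ∧ 0 ≤ R k g 0 ∧ 0 ≤ D k g 0 ∧ 0 ≤ V k g 0) :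
    ∀ t ∈ J, ∀ k g,
      0 ≤ Sx k g t ∧ 0 ≤ Su k g t ∧ 0 ≤ Sv k g t ∧ 0 ≤ Sp k g t
      ∧ 0 ≤ E k g t ∧ 0 ≤ Ev k g t ∧ 0 ≤ I k g t ∧ 0 ≤ Iv k g t
      ∧ 0 ≤ Q0 k g t ∧ 0 ≤ Q1 k g t ∧ 0 ≤ Hw k g t ∧ 0 ≤ Hc k g t
      ∧ 0 ≤ Hr k g t ∧ 0 ≤ R k g t ∧ 0 ≤ D k g t ∧ 0 ≤ V k g t := by
  subst hJ
  intro t ht k g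
  obtain ⟨h01, h02, h03, h04, h05, h06, h07, h08, h09, h10, h11, h12, h13, h14, h15, h16⟩ :=
    h0 k g
  have hlc := hlam_cont k g
  have hvc := hvac_cont k g
  -- Sx
  have hSxnn : ∀ s ∈ Set.Ici (0:ℝ), 0 ≤ Sx k g s :=
    nonneg_of_linear_bound (lam k g) (Sx k g) (fun s => -(lam k g s * Sx k g s)) hlc
      (fun s hs => hSx s hs k g) (fun s _ => le_refl _) h01
  -- Su
  have hSunn : ∀ s ∈ Set.Ici (0:ℝ), 0 ≤ Su k g s :=
    nonneg_of_linear_bound (fun s => lam k g s + vac k g s) (Su k g)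
      (fun s => -(lam k g s * Su k g s) - vac k g s * Su k g s) (hlc.add hvc)
      (fun s hs => hSu s hs k g) (fun s _ => le_of_eq (by ring)) h02
  -- Sv
  have hSvnn : ∀ s ∈ Set.Ici (0:ℝ), 0 ≤ Sv k g s :=
    nonneg_of_linear_bound (fun s => lam k g s + TV⁻¹) (Sv k g)
      (fun s => vac k g s * Su k g s - lam k g s * Sv k g s - Sv k g s / TV)
      (hlc.add continuous_const) (fun s hs => hSv s hs k g)
      (fun s hs => by
        have hb := mul_nonneg (hvac_nonneg s hs k g) (hSunn s hs)
        have hdiv : Sv k g s / TV = TV⁻¹ * Sv k g s := by rw [div_eq_inv_mul]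
        beta_reduce; rw [hdiv]; nlinarith [hb]) h03
  -- Sp
  have hSpnn : ∀ s ∈ Set.Ici (0:ℝ), 0 ≤ Sp k g s :=
    nonneg_of_linear_bound (fun s => (1 - ω) * lam k g s) (Sp k g)
      (fun s => (1 - e) * Sv k g s / TV - (1 - ω) * lam k g s * Sp k g s)
      (continuous_const.mul hlc) (fun s hs => hSp s hs k g)
      (fun s hs => by
        have hb : 0 ≤ (1 - e) * Sv k g s / TV :=
          div_nonneg (mul_nonneg (by linarith [he.2]) (hSvnn s hs)) hTV.le
        linarith) h04
  -- E
  have hEnn : ∀ s ∈ Set.Ici (0:ℝ), 0 ≤ E k g s :=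
    nonneg_of_linear_bound (fun _ => TE⁻¹) (E k g)
      (fun s => lam k g s * (Sx k g s + Su k g s + Sv k g s) - E k g s / TE)
      continuous_const (fun s hs => hE s hs k g)
      (fun s hs => by
        have hb := mul_nonneg (hlam_nonneg s hs k g)
          (add_nonneg (add_nonneg (hSxnn s hs) (hSunn s hs)) (hSvnn s hs))
        have hdiv : E k g s / TE = TE⁻¹ * E k g s := by rw [div_eq_inv_mul]
        beta_reduce; rw [hdiv]; nlinarith [hb]) h05
  -- Ev
  have hEvnn : ∀ s ∈ Set.Ici (0:ℝ), 0 ≤ Ev k g s :=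
    nonneg_of_linear_bound (fun _ => TE⁻¹) (Ev k g)
      (fun s => (1 - ω) * lam k g s * Sp k g s - Ev k g s / TE)
      continuous_const (fun s hs => hEv s hs k g)
      (fun s hs => by
        have hb := mul_nonneg (mul_nonneg (show (0:ℝ) ≤ 1 - ω by linarith [hω.2])
          (hlam_nonneg s hs k g)) (hSpnn s hs)
        have hdiv : Ev k g s / TE = TE⁻¹ * Ev k g s := by rw [div_eq_inv_mul]
        beta_reduce; rw [hdiv]; nlinarith [hb]) h06
  -- I
  have hInn : ∀ s ∈ Set.Ici (0:ℝ), 0 ≤ I k g s :=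
    nonneg_of_linear_bound (fun _ => TI⁻¹) (I k g)
      (fun s => E k g s / TE - I k g s / TI)
      continuous_const (fun s hs => hI s hs k g)
      (fun s hs => by
        have hb : 0 ≤ E k g s / TE := div_nonneg (hEnn s hs) hTE.le
        have hdiv : I k g s / TI = TI⁻¹ * I k g s := by rw [div_eq_inv_mul]
        beta_reduce; rw [hdiv]; nlinarith [hb]) h07
  -- Iv
  have hIvnn : ∀ s ∈ Set.Ici (0:ℝ), 0 ≤ Iv k g s :=
    nonneg_of_linear_bound (fun _ => TI⁻¹) (Iv k g)
      (fun s => Ev k g s / TE - Iv k g s / TI)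
      continuous_const (fun s hs => hIv s hs k g)
      (fun s hs => by
        have hb : 0 ≤ Ev k g s / TE := div_nonneg (hEvnn s hs) hTE.le
        have hdiv : Iv k g s / TI = TI⁻¹ * Iv k g s := by rw [div_eq_inv_mul]
        beta_reduce; rw [hdiv]; nlinarith [hb]) h08
  -- Q0
  have hQ0nn : ∀ s ∈ Set.Ici (0:ℝ), 0 ≤ Q0 k g s :=
    nonneg_of_linear_bound (fun _ => TQ0⁻¹) (Q0 k g)
      (fun s => (1 - ph g) * I k g s / TI + (1 - (1 - π) * ph g) * Iv k g s / TI
        - Q0 k g s / TQ0)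
      continuous_const (fun s hs => hQ0 s hs k g)
      (fun s hs => by
        have hc1 : (0:ℝ) ≤ 1 - ph g := by linarith [(hph g).2]
        have hc2 : (0:ℝ) ≤ 1 - (1 - π) * ph g := by
          nlinarith [hπ.1, hπ.2, (hph g).1, (hph g).2]
        have hb1 : 0 ≤ (1 - ph g) * I k g s / TI :=
          div_nonneg (mul_nonneg hc1 (hInn s hs)) hTI.le
        have hb2 : 0 ≤ (1 - (1 - π) * ph g) * Iv k g s / TI :=
          div_nonneg (mul_nonneg hc2 (hIvnn s hs)) hTI.le
        have hdiv : Q0 k g s / TQ0 = TQ0⁻¹ * Q0 k g s := by rw [div_eq_inv_mul]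
        beta_reduce; rw [hdiv]; nlinarith [hb1, hb2]) h09
  -- Q1
  have hQ1nn : ∀ s ∈ Set.Ici (0:ℝ), 0 ≤ Q1 k g s :=
    nonneg_of_linear_bound (fun _ => TQ1⁻¹) (Q1 k g)
      (fun s => ph g * (I k g s + (1 - π) * Iv k g s) / TI - Q1 k g s / TQ1)
      continuous_const (fun s hs => hQ1 s hs k g)
      (fun s hs => by
        have hb : 0 ≤ ph g * (I k g s + (1 - π) * Iv k g s) / TI :=
          div_nonneg (mul_nonneg (hph g).1 (add_nonneg (hInn s hs)
            (mul_nonneg (by linarith [hπ.2]) (hIvnn s hs)))) hTI.le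
        have hdiv : Q1 k g s / TQ1 = TQ1⁻¹ * Q1 k g s := by rw [div_eq_inv_mul]
        beta_reduce; rw [hdiv]; nlinarith [hb]) h10
  -- Hw
  have hHwnn : ∀ s ∈ Set.Ici (0:ℝ), 0 ≤ Hw k g s :=
    nonneg_of_linear_bound (fun _ => THw⁻¹) (Hw k g)
      (fun s => Q1 k g s / TQ1 - Hw k g s / THw)
      continuous_const (fun s hs => hHw s hs k g)
      (fun s hs => by
        have hb : 0 ≤ Q1 k g s / TQ1 := div_nonneg (hQ1nn s hs) hTQ1.le
        have hdiv : Hw k g s / THw = THw⁻¹ * Hw k g s := by rw [div_eq_inv_mul]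
        beta_reduce; rw [hdiv]; nlinarith [hb]) h11
  -- Hc
  have hHcnn : ∀ s ∈ Set.Ici (0:ℝ), 0 ≤ Hc k g s :=
    nonneg_of_linear_bound (fun _ => THc⁻¹) (Hc k g)
      (fun s => pc g * Hw k g s / THw - Hc k g s / THc)
      continuous_const (fun s hs => hHc s hs k g)
      (fun s hs => by
        have hb : 0 ≤ pc g * Hw k g s / THw :=
          div_nonneg (mul_nonneg (hpc g).1 (hHwnn s hs)) hTHw.le
        have hdiv : Hc k g s / THc = THc⁻¹ * Hc k g s := by rw [div_eq_inv_mul]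
        beta_reduce; rw [hdiv]; nlinarith [hb]) h12
  -- Hr
  have hHrnn : ∀ s ∈ Set.Ici (0:ℝ), 0 ≤ Hr k g s :=
    nonneg_of_linear_bound (fun _ => THr⁻¹) (Hr k g)
      (fun s => (1 - muc g) * Hc k g s / THc - Hr k g s / THr)
      continuous_const (fun s hs => hHr s hs k g)
      (fun s hs => by
        have hb : 0 ≤ (1 - muc g) * Hc k g s / THc :=
          div_nonneg (mul_nonneg (by linarith [(hmuc g).2]) (hHcnn s hs)) hTHc.le
        have hdiv : Hr k g s / THr = THr⁻¹ * Hr k g s := by rw [div_eq_inv_mul]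
        beta_reduce; rw [hdiv]; nlinarith [hb]) h13
  -- R
  have hRnn : ∀ s ∈ Set.Ici (0:ℝ), 0 ≤ R k g s :=
    nonneg_of_linear_bound (fun _ => (0:ℝ)) (R k g)
      (fun s => (1 - muq g) * Q0 k g s / TQ0
        + (1 - muw g) * (1 - pc g) * Hw k g s / THw + Hr k g s / THr)
      continuous_const (fun s hs => hR s hs k g)
      (fun s hs => by
        have hb1 : 0 ≤ (1 - muq g) * Q0 k g s / TQ0 :=
          div_nonneg (mul_nonneg (by linarith [(hmuq g).2]) (hQ0nn s hs)) hTQ0.le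
        have hb2 : 0 ≤ (1 - muw g) * (1 - pc g) * Hw k g s / THw :=
          div_nonneg (mul_nonneg (mul_nonneg (by linarith [(hmuw g).2])
            (by linarith [(hpc g).2])) (hHwnn s hs)) hTHw.le
        have hb3 : 0 ≤ Hr k g s / THr := div_nonneg (hHrnn s hs) hTHr.le
        simp only [zero_mul, neg_zero]
        linarith) h14
  -- D
  have hDnn : ∀ s ∈ Set.Ici (0:ℝ), 0 ≤ D k g s :=
    nonneg_of_linear_bound (fun _ => (0:ℝ)) (D k g)
      (fun s => muq g * Q0 k g s / TQ0 + muw g * (1 - pc g) * Hw k g s / THw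
        + muc g * Hc k g s / THc)
      continuous_const (fun s hs => hD s hs k g)
      (fun s hs => by
        have hb1 : 0 ≤ muq g * Q0 k g s / TQ0 :=
          div_nonneg (mul_nonneg (hmuq g).1 (hQ0nn s hs)) hTQ0.le
        have hb2 : 0 ≤ muw g * (1 - pc g) * Hw k g s / THw :=
          div_nonneg (mul_nonneg (mul_nonneg (hmuw g).1
            (by linarith [(hpc g).2])) (hHwnn s hs)) hTHw.le
        have hb3 : 0 ≤ muc g * Hc k g s / THc :=
          div_nonneg (mul_nonneg (hmuc g).1 (hHcnn s hs)) hTHc.le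
        simp only [zero_mul, neg_zero]
        linarith) h15
  -- V
  have hVnn : ∀ s ∈ Set.Ici (0:ℝ), 0 ≤ V k g s :=
    nonneg_of_linear_bound (fun _ => (0:ℝ)) (V k g)
      (fun s => e * Sv k g s / TV)
      continuous_const (fun s hs => hV s hs k g)
      (fun s hs => by
        have hb : 0 ≤ e * Sv k g s / TV :=
          div_nonneg (mul_nonneg he.1 (hSvnn s hs)) hTV.le
        simp only [zero_mul, neg_zero]
        linarith) h16
  exact ⟨hSxnn t ht, hSunn t ht, hSvnn t ht, hSpnn t ht, hEnn t ht, hEvnn t ht,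
    hInn t ht, hIvnn t ht, hQ0nn t ht, hQ1nn t ht, hHwnn t ht, hHcnn t ht,
    hHrnn t ht, hRnn t ht, hDnn t ht, hVnn t ht⟩
end
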